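/- Given nonnegative integers a_1,...,a_n, an integer a, and 2 ≤ k ≤ n with max{a_1,...,a_n, ⌈(a_1+...+a_n)/(k-1)⌉} ≤ a ≤ a_1+...+a_n, there exist finite sets A_1,...,A_n with |A_i| = a_i, |A_1 ∪ ... ∪ A_n| = a, and the intersection of any k of the sets empty. -/

import Mathlib

private lemma stmt6_find_idx (P : ℕ → ℕ) (x : ℕ) (h0 : P 0 = 0) :
    ∀ m : ℕ, x < P m → ∃ i < m, P i ≤ x ∧ x < P (i + 1) := by
  intro m
  induction m with
  | zero => intro h; omega
  | succ m ih =>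
    intro hx
    by_cases h : x < P m
    · obtain ⟨i, hi, h1, h2⟩ := ih h
      exact ⟨i, by omega, h1, h2⟩
    · exact ⟨m, by omega, by omega, hx⟩

/-- Given nonnegative integers `a i`, `2 ≤ k ≤ n`, and an integer `t` with
`max {a i} ≤ t`, `∑ a i ≤ (k-1)·t` (i.e. `⌈(∑ a i)/(k-1)⌉ ≤ t`) and `t ≤ ∑ a i`,
there exist finite sets `A i` with `|A i| = a i`, `|⋃ A i| = t`, and every
`k`-fold intersection empty. -/
theorem stmt6 (n k : ℕ) (hn : 2 ≤ n) (hk : 2 ≤ k) (hkn : k ≤ n)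
    (a : Fin n → ℕ) (t : ℕ)
    (hmax : ∀ i, a i ≤ t) (hbar : ∑ j, a j ≤ (k - 1) * t)
    (hupper : t ≤ ∑ j, a j) :
    ∃ A : Fin n → Set ℕ, (∀ i, (A i).Finite) ∧
      (∀ i, (A i).ncard = a i) ∧
      (⋃ i, A i).ncard = t ∧
      (∀ s : Finset (Fin n), s.card = k → (⋂ i ∈ s, A i) = ∅) := by
  rcases Nat.eq_zero_or_pos t with ht0 | ht
  · -- t = 0 : all sets empty
    subst ht0
    refine ⟨fun _ => ∅, fun _ => Set.finite_empty, fun i => ?_, ?_, ?_⟩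
    · have := hmax i; simp; omega
    · simp
    · intro s hs
      have hne : s.Nonempty := Finset.card_pos.mp (by omega)
      obtain ⟨i0, hi0⟩ := hne
      apply Set.eq_empty_of_subset_empty
      intro x hx
      exact (Set.mem_iInter₂.mp hx i0 hi0)
  · -- main case : t > 0
    set a' : ℕ → ℕ := fun j => if h : j < n then a ⟨j, h⟩ else 0 with ha'
    set P : ℕ → ℕ := fun i => ∑ j ∈ Finset.range i, a' j with hP
    have hP0 : P 0 = 0 := by simp [hP]
    have hPmono : Monotone P := fun i j h =>
      Finset.sum_le_sum_of_subset (Finset.range_subset_range.2 h)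
    have hPsucc : ∀ i : Fin n, P ((i : ℕ) + 1) = P (i : ℕ) + a i := by
      intro i
      simp only [hP, Finset.sum_range_succ]
      congr 1
      simp [ha', i.isLt]
    have hPn : P n = ∑ j, a j := by
      simp only [hP]
      rw [Finset.sum_range fun j => a' j]
      apply Finset.sum_congr rfl
      intro i _
      simp [ha', i.isLt]
    set A : Fin n → Set ℕ := fun i => (· % t) '' Set.Ico (P i) (P i + a i) with hA
    have hmem : ∀ (i : Fin n) (x : ℕ),
        x ∈ A i ↔ ∃ y, (P i ≤ y ∧ y < P i + a i) ∧ y % t = x := by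
      intro i x
      simp [hA, Set.mem_image, Set.mem_Ico, and_assoc]
    -- injectivity of mod on each interval
    have hinj : ∀ i : Fin n, Set.InjOn (· % t) (Set.Ico (P i) (P i + a i)) := by
      intro i y1 hy1 y2 hy2 h
      simp only [Set.mem_Ico] at hy1 hy2
      rcases le_total y1 y2 with hle | hle
      · have hmod : y1 % t = y2 % t := h
        have hdvd : t ∣ y2 - y1 := (Nat.modEq_iff_dvd' hle).mp hmod
        have hlt : y2 - y1 < t := by have := hmax i; omega
        have := Nat.eq_zero_of_dvd_of_lt hdvd hlt
        omega
      · have hmod : y2 % t = y1 % t := h.symm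
        have hdvd : t ∣ y1 - y2 := (Nat.modEq_iff_dvd' hle).mp hmod
        have hlt : y1 - y2 < t := by have := hmax i; omega
        have := Nat.eq_zero_of_dvd_of_lt hdvd hlt
        omega
    refine ⟨A, fun i => (Set.finite_Ico _ _).image _, fun i => ?_, ?_, ?_⟩
    · -- cardinality of each A i
      rw [hA]
      rw [Set.ncard_image_of_injOn (hinj i)]
      rw [← Finset.coe_Ico, Set.ncard_coe_finset, Nat.card_Ico]
      omega
    · -- cardinality of the union
      have hU : (⋃ i, A i) = ↑(Finset.range t) := by
        ext x
        simp only [Set.mem_iUnion, Finset.coe_range, Set.mem_Iio]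
        constructor
        · rintro ⟨i, hx⟩
          obtain ⟨y, _, hy2⟩ := (hmem i x).mp hx
          rw [← hy2]
          exact Nat.mod_lt _ ht
        · intro hx
          have hxPn : x < P n := by rw [hPn]; omega
          obtain ⟨i, hi, h1, h2⟩ := stmt6_find_idx P x hP0 n hxPn
          refine ⟨⟨i, hi⟩, (hmem ⟨i, hi⟩ x).mpr ⟨x, ⟨h1, ?_⟩, Nat.mod_eq_of_lt hx⟩⟩
          have := hPsucc ⟨i, hi⟩
          simp only [Fin.val_mk] at this ⊢
          omega
      rw [hU, Set.ncard_coe_finset, Finset.card_range]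
    · -- k-fold intersections are empty
      intro s hs
      rw [Set.eq_empty_iff_forall_notMem]
      intro x hx
      rw [Set.mem_iInter₂] at hx
      -- x < t
      have hne : s.Nonempty := Finset.card_pos.mp (by omega)
      obtain ⟨i0, hi0⟩ := hne
      obtain ⟨y0, _, hy0⟩ := (hmem i0 x).mp (hx i0 hi0)
      have hxt : x < t := by rw [← hy0]; exact Nat.mod_lt _ ht
      have hx' : ∀ i ∈ s, ∃ y, (P i ≤ y ∧ y < P (i : ℕ) + a i) ∧ y % t = x :=
        fun i hi => (hmem i x).mp (hx i hi)
      choose y hy hymod using hx'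
      -- for i ∈ s, y i hi = x + ((y i hi - x)/t) * t
      have hy_eq : ∀ (i : Fin n) (hi : i ∈ s),
          y i hi = x + ((y i hi - x) / t) * t := by
        intro i hi
        have hxle : x ≤ y i hi := by
          rw [← hymod i hi]; exact Nat.mod_le _ _
        have hdvd : t ∣ y i hi - x := by
          apply (Nat.modEq_iff_dvd' hxle).mp
          show x % t = y i hi % t
          rw [hymod i hi, Nat.mod_eq_of_lt hxt]
        have := Nat.div_mul_cancel hdvd
        omega
      have hylt : ∀ (i : Fin n) (hi : i ∈ s), y i hi < (k - 1) * t := by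
        intro i hi
        have h1 := (hy i hi).2
        have h2 : P (i : ℕ) + a i = P ((i : ℕ) + 1) := (hPsucc i).symm
        have h3 : P ((i : ℕ) + 1) ≤ P n := hPmono (by omega)
        rw [hPn] at h3
        omega
      -- the quotient map is injective into range (k-1)
      have hcard : s.card ≤ (Finset.range (k - 1)).card := by
        apply Finset.card_le_card_of_injOn
          (fun i => ((if h : i ∈ s then y i h else 0) - x) / t)
        · intro i hi
          simp only [Finset.mem_coe] at hi; simp only [Finset.mem_coe, Finset.mem_range, dif_pos hi]
          have h1 := hy_eq i hi
          have h2 := hylt i hi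
          have : ((y i hi - x) / t) * t < (k - 1) * t := by omega
          exact Nat.lt_of_mul_lt_mul_right this
        · intro i hi j hj h
          simp only [Finset.mem_coe] at hi hj
          simp only [dif_pos hi, dif_pos hj] at h
          have heq : y i hi = y j hj := by
            have h1 := hy_eq i hi
            have h2 := hy_eq j hj
            rw [h1, h2, h]
          by_contra hij
          have hYi := hy i hi
          have hYj := hy j hj
          rcases lt_trichotomy (i : ℕ) (j : ℕ) with hlt | heq' | hlt
          · have h1 : P (i : ℕ) + a i = P ((i : ℕ) + 1) := (hPsucc i).symm
            have h2 : P ((i : ℕ) + 1) ≤ P (j : ℕ) := hPmono (by omega)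
            omega
          · exact hij (Fin.ext heq')
          · have h1 : P (j : ℕ) + a j = P ((j : ℕ) + 1) := (hPsucc j).symm
            have h2 : P ((j : ℕ) + 1) ≤ P (i : ℕ) := hPmono (by omega)
            omega
      rw [hs, Finset.card_range] at hcard
      omega
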